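/- Let K be an infinite compact Hausdorff scattered space. Then the Banach space C(K) of continuous real-valued functions is isomorphic (as a topological vector space / Banach space, via a bounded linear bijection) to c₀ ⊕ C(K). -/

import Mathlib

open Set

/-- A topological space is scattered if every nonempty subset has a point isolated in it. -/
def IsScatteredSpace (X : Type*) [TopologicalSpace X] : Prop :=
  ∀ S : Set X, S.Nonempty → ∃ x ∈ S, ∃ U : Set X, IsOpen U ∧ U ∩ S = {x}

section Stmt5AuxSection
open Filter Topology
set_option linter.unusedSectionVars false



theorem exists_conv_seq (K : Type*) [TopologicalSpace K] [CompactSpace K] [T2Space K]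
    [Infinite K] (h : IsScatteredSpace K) :
    ∃ (x : ℕ → K) (p : K), Function.Injective x ∧ (∀ n, IsOpen {x n}) ∧ ¬ IsOpen {p} ∧
      Tendsto x atTop (𝓝 p) := by
  classical
  set Kd : Set K := {t | ¬ IsOpen ({t} : Set K)} with hKd
  -- Kd nonempty
  have hKdne : Kd.Nonempty := by
    rw [nonempty_iff_ne_empty]
    intro he
    have : ∀ t : K, IsOpen ({t} : Set K) := by
      intro t
      by_contra hc
      exact (eq_empty_iff_forall_notMem.mp he t) hc
    haveI : DiscreteTopology K := discreteTopology_iff_isOpen_singleton.mpr this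
    haveI := finite_of_compact_of_discrete (X := K)
    exact not_finite K
  obtain ⟨p, hpKd, U, hUopen, hU⟩ := h Kd hKdne
  have hpU : p ∈ U := by
    have : p ∈ U ∩ Kd := hU ▸ rfl
    exact this.1
  -- regularity: V open with p ∈ V, closure V ⊆ U
  obtain ⟨V0, hV0nhds, hV0closed, hV0sub⟩ :=
    exists_mem_nhds_isClosed_subset (hUopen.mem_nhds hpU)
  set V : Set K := interior V0 with hV
  have hpV : p ∈ V := mem_interior_iff_mem_nhds.mpr hV0nhds
  have hVopen : IsOpen V := isOpen_interior
  have hclV : closure V ⊆ U := by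
    refine subset_trans ?_ hV0sub
    exact (IsClosed.closure_subset_iff hV0closed).mpr interior_subset
  -- every point of closure V other than p is isolated
  have hiso : ∀ t ∈ closure V, t ≠ p → IsOpen ({t} : Set K) := by
    intro t ht hne
    by_contra hc
    have : t ∈ U ∩ Kd := ⟨hclV ht, hc⟩
    rw [hU] at this
    exact hne this
  -- V is infinite
  have hVinf : V.Infinite := by
    intro hfin
    apply hpKd
    have hclosed : IsClosed (V \ {p}) := (hfin.subset diff_subset).isClosed
    have : IsOpen (V ∩ (V \ {p})ᶜ) := hVopen.inter hclosed.isOpen_compl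
    have heq : V ∩ (V \ {p})ᶜ = {p} := by
      ext t
      simp only [mem_inter_iff, mem_compl_iff, mem_diff, mem_singleton_iff]
      constructor
      · rintro ⟨htV, ht⟩
        by_contra hne
        exact ht ⟨htV, hne⟩
      · rintro rfl
        exact ⟨hpV, fun h => h.2 rfl⟩
    rwa [heq] at this
  have hVpinf : (V \ {p}).Infinite := hVinf.diff (finite_singleton p)
  set emb := hVpinf.natEmbedding
  set x : ℕ → K := fun n => (emb n : K) with hx
  have hxmem : ∀ n, x n ∈ V \ {p} := fun n => (emb n).2
  have hxinj : Function.Injective x := fun a b hab => emb.injective (Subtype.ext hab)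
  have hxiso : ∀ n, IsOpen ({x n} : Set K) := by
    intro n
    exact hiso _ (subset_closure (hxmem n).1) (by simpa using (hxmem n).2)
  refine ⟨x, p, hxinj, hxiso, hpKd, ?_⟩
  -- convergence
  rw [tendsto_nhds]
  intro W hWopen hpW
  by_contra hc
  rw [mem_atTop_sets] at hc
  push_neg at hc
  have hSinf : {n | x n ∉ W}.Infinite := by
    apply Set.infinite_of_forall_exists_gt
    intro a
    obtain ⟨n, hn, hnW⟩ := hc (a + 1)
    exact ⟨n, hnW, by omega⟩
  have hTinf : (x '' {n | x n ∉ W}).Infinite := hSinf.image (hxinj.injOn)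
  have hCcomp : IsCompact (closure V ∩ Wᶜ) :=
    (isClosed_closure.inter hWopen.isClosed_compl).isCompact
  have hTsub : x '' {n | x n ∉ W} ⊆ closure V ∩ Wᶜ := by
    rintro _ ⟨n, hn, rfl⟩
    exact ⟨subset_closure (hxmem n).1, hn⟩
  obtain ⟨y, hyC, hacc⟩ := hTinf.exists_accPt_of_subset_isCompact hCcomp hTsub
  have hyKd : ¬ IsOpen ({y} : Set K) := by
    intro hy
    obtain ⟨z, hz, hzy⟩ := (accPt_iff_nhds (x := y)).mp hacc {y} (hy.mem_nhds rfl)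
    exact hzy hz.1
  have : y ∈ U ∩ Kd := ⟨hclV hyC.1, hyKd⟩
  rw [hU] at this
  rw [this] at hyC
  exact hyC.2 hpW


namespace Stmt5Aux


lemma c0_tendsto (a : ZeroAtInftyContinuousMap ℕ ℝ) :
    Tendsto (fun n => a n) atTop (𝓝 0) := by
  have := a.zero_at_infty'
  rwa [Filter.cocompact_eq_cofinite, Nat.cofinite_eq_atTop] at this

lemma c0_eval (a : ZeroAtInftyContinuousMap ℕ ℝ) (n : ℕ) : ‖a n‖ ≤ ‖a‖ := by
  rw [← ZeroAtInftyContinuousMap.norm_toBCF_eq_norm]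
  exact a.toBCF.norm_coe_le_norm n

lemma c0_norm_le (a : ZeroAtInftyContinuousMap ℕ ℝ) {C : ℝ} (h0 : 0 ≤ C)
    (h : ∀ n, ‖a n‖ ≤ C) : ‖a‖ ≤ C := by
  rw [← ZeroAtInftyContinuousMap.norm_toBCF_eq_norm]
  exact (BoundedContinuousFunction.norm_le h0).mpr h

variable {K : Type*} [TopologicalSpace K] [CompactSpace K] [T2Space K]
  {x : ℕ → K} {p : K}

/-- The extension of a `c₀` sequence to `K`, supported on the range of `x`. -/
noncomputable def Efun (x : ℕ → K) (a : ZeroAtInftyContinuousMap ℕ ℝ) : K → ℝ :=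
  Function.extend x (fun n => a n) 0

lemma Efun_apply_x (hxinj : Function.Injective x) (a : ZeroAtInftyContinuousMap ℕ ℝ) (n : ℕ) :
    Efun x a (x n) = a n :=
  hxinj.extend_apply _ _ _

lemma Efun_apply_nmem (a : ZeroAtInftyContinuousMap ℕ ℝ) {t : K} (ht : t ∉ Set.range x) :
    Efun x a t = 0 :=
  Function.extend_apply' _ _ _ (by simpa [Set.range] using ht)

lemma Efun_cont (hxinj : Function.Injective x) (hxiso : ∀ n, IsOpen ({x n} : Set K))
    (a : ZeroAtInftyContinuousMap ℕ ℝ) : Continuous (Efun x a) := by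
  rw [continuous_iff_continuousAt]
  intro t
  by_cases ht : t ∈ Set.range x
  · obtain ⟨n, rfl⟩ := ht
    unfold ContinuousAt
    rw [(isOpen_singleton_iff_nhds_eq_pure (x n)).mp (hxiso n)]
    exact tendsto_pure_nhds _ _
  · unfold ContinuousAt
    rw [Efun_apply_nmem a ht, NormedAddCommGroup.tendsto_nhds_zero]
    intro ε hε
    obtain ⟨N, hN⟩ := (NormedAddCommGroup.tendsto_nhds_zero.mp (c0_tendsto a) ε hε).exists_forall_of_atTop
    set F : Set K := x '' (Set.Iio N) with hF
    have hFclosed : IsClosed F := ((Set.finite_Iio N).image x).isClosed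
    have htF : t ∈ Fᶜ := fun htF => ht (image_subset_range x _ htF)
    filter_upwards [hFclosed.isOpen_compl.mem_nhds htF] with s hs
    by_cases hsr : s ∈ Set.range x
    · obtain ⟨m, rfl⟩ := hsr
      rw [Efun_apply_x hxinj]
      refine hN m ?_
      by_contra hm
      exact hs ⟨m, Set.mem_Iio.mpr (by omega), rfl⟩
    · rw [Efun_apply_nmem a hsr]
      simpa using hε

/-- `E` as a continuous linear map `c₀ →L[ℝ] C(K, ℝ)`. -/
noncomputable def E (hxinj : Function.Injective x) (hxiso : ∀ n, IsOpen ({x n} : Set K)) :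
    ZeroAtInftyContinuousMap ℕ ℝ →L[ℝ] C(K, ℝ) :=
  LinearMap.mkContinuous
    { toFun := fun a => ⟨Efun x a, Efun_cont hxinj hxiso a⟩
      map_add' := by
        intro a b
        ext t
        by_cases ht : t ∈ Set.range x
        · obtain ⟨n, rfl⟩ := ht
          simp [Efun_apply_x hxinj]
        · simp [Efun_apply_nmem _ ht]
      map_smul' := by
        intro c a
        ext t
        by_cases ht : t ∈ Set.range x
        · obtain ⟨n, rfl⟩ := ht
          simp [Efun_apply_x hxinj]
        · simp [Efun_apply_nmem _ ht] }
    1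
    (by
      intro a
      rw [one_mul]
      refine (ContinuousMap.norm_le _ (norm_nonneg a)).mpr ?_
      intro t
      by_cases ht : t ∈ Set.range x
      · obtain ⟨n, rfl⟩ := ht
        simpa [Efun_apply_x hxinj] using c0_eval a n
      · simp [Efun_apply_nmem _ ht, norm_nonneg])

lemma E_apply_x (hxinj : Function.Injective x) (hxiso : ∀ n, IsOpen ({x n} : Set K))
    (a : ZeroAtInftyContinuousMap ℕ ℝ) (n : ℕ) : E hxinj hxiso a (x n) = a n :=
  Efun_apply_x hxinj a n

lemma E_apply_nmem (hxinj : Function.Injective x) (hxiso : ∀ n, IsOpen ({x n} : Set K))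
    (a : ZeroAtInftyContinuousMap ℕ ℝ) {t : K} (ht : t ∉ Set.range x) :
    E hxinj hxiso a t = 0 :=
  Efun_apply_nmem a ht

set_option linter.unusedSectionVars false

lemma c0_norm_le' (a : ZeroAtInftyContinuousMap ℕ ℝ) {C : ℝ} (h0 : 0 ≤ C)
    (h : ∀ n, ‖a n‖ ≤ C) : ‖a‖ ≤ C := by
  rw [← ZeroAtInftyContinuousMap.norm_toBCF_eq_norm]
  exact (BoundedContinuousFunction.norm_le h0).mpr h

variable {K : Type*} [TopologicalSpace K] [CompactSpace K] [T2Space K]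
  {x : ℕ → K} {p : K}

noncomputable def Q (hconv : Tendsto x atTop (𝓝 p)) :
    C(K, ℝ) →L[ℝ] ZeroAtInftyContinuousMap ℕ ℝ :=
  LinearMap.mkContinuous
    { toFun := fun f => ⟨⟨fun n => f (x n) - f p, continuous_of_discreteTopology⟩, by
        rw [Filter.cocompact_eq_cofinite, Nat.cofinite_eq_atTop]
        have h1 : Tendsto (fun n => f (x n)) atTop (𝓝 (f p)) :=
          (f.continuous.tendsto p).comp hconv
        simpa using h1.sub_const (f p)⟩
      map_add' := by intro f g; ext n; simp; ring
      map_smul' := by intro c f; ext n; simp; ring }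
    2
    (by intro f
        refine c0_norm_le' _ (by positivity) ?_
        intro n
        calc ‖f (x n) - f p‖ ≤ ‖f (x n)‖ + ‖f p‖ := norm_sub_le _ _
          _ ≤ ‖f‖ + ‖f‖ := add_le_add (f.norm_coe_le_norm _) (f.norm_coe_le_norm _)
          _ = 2 * ‖f‖ := by ring)

lemma Q_apply (hconv : Tendsto x atTop (𝓝 p)) (f : C(K, ℝ)) (n : ℕ) :
    Q hconv f n = f (x n) - f p := rfl

def Ysub (x : ℕ → K) (p : K) : Submodule ℝ C(K, ℝ) where
  carrier := {f | ∀ n, f (x n) = f p}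
  add_mem' := by intro f g hf hg n; simp [hf n, hg n]
  zero_mem' := by intro n; simp
  smul_mem' := by intro c f hf n; simp [hf n]


noncomputable def mainEquiv (hxinj : Function.Injective x)
    (hxiso : ∀ n, IsOpen ({x n} : Set K)) (hp : ¬ IsOpen ({p} : Set K))
    (hconv : Tendsto x atTop (𝓝 p)) :
    C(K, ℝ) ≃L[ℝ] ZeroAtInftyContinuousMap ℕ ℝ × Ysub x p := by
  have hpn : p ∉ Set.range x := by
    rintro ⟨n, rfl⟩; exact hp (hxiso n)
  have hmem : ∀ f : C(K, ℝ),
      (ContinuousLinearMap.id ℝ C(K, ℝ) - (E hxinj hxiso).comp (Q hconv)) f ∈ Ysub x p := by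
    intro f n
    simp only [ContinuousLinearMap.sub_apply, ContinuousLinearMap.id_apply,
      ContinuousLinearMap.comp_apply, ContinuousMap.sub_apply]
    rw [E_apply_x hxinj hxiso, E_apply_nmem hxinj hxiso _ hpn, Q_apply]
    ring
  have hQ : ∀ (a : ZeroAtInftyContinuousMap ℕ ℝ) (g : C(K, ℝ)), g ∈ Ysub x p →
      Q hconv (E hxinj hxiso a + g) = a := by
    intro a g hg
    ext n
    rw [Q_apply]
    simp only [ContinuousMap.add_apply]
    rw [E_apply_x hxinj hxiso, E_apply_nmem hxinj hxiso _ hpn, hg n]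
    ring
  refine ContinuousLinearEquiv.equivOfInverse
    ((Q hconv).prod
      ((ContinuousLinearMap.id ℝ C(K, ℝ) - (E hxinj hxiso).comp (Q hconv)).codRestrict
        (Ysub x p) hmem))
    ((E hxinj hxiso).comp (ContinuousLinearMap.fst ℝ _ _) +
      (Ysub x p).subtypeL.comp (ContinuousLinearMap.snd ℝ _ _)) ?_ ?_
  · intro f
    show E hxinj hxiso (Q hconv f) + (f - E hxinj hxiso (Q hconv f)) = f
    abel
  · rintro ⟨a, g, hg⟩
    have hb : E hxinj hxiso a + g ∈ Ysub x p → True := fun _ => trivial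
    refine Prod.ext ?_ ?_
    · show Q hconv (E hxinj hxiso a + g) = a
      exact hQ a g hg
    · refine Subtype.ext ?_
      show (E hxinj hxiso a + g) - E hxinj hxiso (Q hconv (E hxinj hxiso a + g)) = g
      rw [hQ a g hg]
      abel




lemma c0_tendsto' (a : ZeroAtInftyContinuousMap ℕ ℝ) :
    Tendsto (fun n => a n) atTop (𝓝 0) := by
  have := a.zero_at_infty'
  rwa [Filter.cocompact_eq_cofinite, Nat.cofinite_eq_atTop] at this

lemma c0_eval' (a : ZeroAtInftyContinuousMap ℕ ℝ) (n : ℕ) : ‖a n‖ ≤ ‖a‖ := by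
  rw [← ZeroAtInftyContinuousMap.norm_toBCF_eq_norm]
  exact a.toBCF.norm_coe_le_norm n

lemma c0_norm_le'' (a : ZeroAtInftyContinuousMap ℕ ℝ) {C : ℝ} (h0 : 0 ≤ C)
    (h : ∀ n, ‖a n‖ ≤ C) : ‖a‖ ≤ C := by
  rw [← ZeroAtInftyContinuousMap.norm_toBCF_eq_norm]
  exact (BoundedContinuousFunction.norm_le h0).mpr h

noncomputable def mkc0 (g : ℕ → ℝ) (hg : Tendsto g atTop (𝓝 0)) :
    ZeroAtInftyContinuousMap ℕ ℝ :=
  ⟨⟨g, continuous_of_discreteTopology⟩, by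
    rw [Filter.cocompact_eq_cofinite, Nat.cofinite_eq_atTop]; exact hg⟩

@[simp] lemma mkc0_apply (g : ℕ → ℝ) (hg) (n : ℕ) : mkc0 g hg n = g n := rfl

lemma tendsto_two_mul : Tendsto (fun n : ℕ => 2 * n) atTop atTop :=
  tendsto_atTop_mono (fun n => by simp only [id_eq]; omega) tendsto_id

lemma tendsto_two_mul_add : Tendsto (fun n : ℕ => 2 * n + 1) atTop atTop :=
  tendsto_atTop_mono (fun n => by simp only [id_eq]; omega) tendsto_id

noncomputable def splitMap : ZeroAtInftyContinuousMap ℕ ℝ →L[ℝ]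
    (ZeroAtInftyContinuousMap ℕ ℝ × ZeroAtInftyContinuousMap ℕ ℝ) :=
  LinearMap.mkContinuous
    { toFun := fun a => (mkc0 (fun n => a (2 * n)) ((c0_tendsto' a).comp tendsto_two_mul),
        mkc0 (fun n => a (2 * n + 1)) ((c0_tendsto' a).comp tendsto_two_mul_add))
      map_add' := by intro a b; refine Prod.ext ?_ ?_ <;> ext n <;> simp
      map_smul' := by intro c a; refine Prod.ext ?_ ?_ <;> ext n <;> simp }
    1
    (by
      intro a
      rw [one_mul, Prod.norm_def]
      exact max_le (c0_norm_le'' _ (norm_nonneg a) fun n => c0_eval' a _)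
        (c0_norm_le'' _ (norm_nonneg a) fun n => c0_eval' a _))

lemma merge_tendsto (z : ZeroAtInftyContinuousMap ℕ ℝ × ZeroAtInftyContinuousMap ℕ ℝ) :
    Tendsto (fun n => if n % 2 = 0 then z.1 (n / 2) else z.2 (n / 2)) atTop (𝓝 0) := by
  rw [NormedAddCommGroup.tendsto_nhds_zero]
  intro ε hε
  obtain ⟨N₁, hN₁⟩ :=
    (NormedAddCommGroup.tendsto_nhds_zero.mp (c0_tendsto' z.1) ε hε).exists_forall_of_atTop
  obtain ⟨N₂, hN₂⟩ :=
    (NormedAddCommGroup.tendsto_nhds_zero.mp (c0_tendsto' z.2) ε hε).exists_forall_of_atTop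
  rw [eventually_atTop]
  refine ⟨2 * (N₁ + N₂), fun n hn => ?_⟩
  by_cases hpar : n % 2 = 0
  · simp only [hpar, if_pos]
    exact hN₁ _ (by omega)
  · simp only [hpar, if_neg, if_false]
    exact hN₂ _ (by omega)

noncomputable def mergeMap : (ZeroAtInftyContinuousMap ℕ ℝ × ZeroAtInftyContinuousMap ℕ ℝ) →L[ℝ]
    ZeroAtInftyContinuousMap ℕ ℝ :=
  LinearMap.mkContinuous
    { toFun := fun z => mkc0 (fun n => if n % 2 = 0 then z.1 (n / 2) else z.2 (n / 2))
        (merge_tendsto z)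
      map_add' := by
        intro a b; ext n
        by_cases hpar : n % 2 = 0 <;> simp [hpar]
      map_smul' := by
        intro c a; ext n
        by_cases hpar : n % 2 = 0 <;> simp [hpar] }
    1
    (by
      intro z
      rw [one_mul]
      refine c0_norm_le'' _ (norm_nonneg z) ?_
      intro n
      show ‖(if n % 2 = 0 then z.1 (n / 2) else z.2 (n / 2))‖ ≤ ‖z‖
      rw [Prod.norm_def]
      by_cases hpar : n % 2 = 0
      · rw [if_pos hpar]
        exact (c0_eval' z.1 _).trans (le_max_left _ _)
      · rw [if_neg hpar]
        exact (c0_eval' z.2 _).trans (le_max_right _ _))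

noncomputable def c0Split : ZeroAtInftyContinuousMap ℕ ℝ ≃L[ℝ]
    (ZeroAtInftyContinuousMap ℕ ℝ × ZeroAtInftyContinuousMap ℕ ℝ) := by
  refine ContinuousLinearEquiv.equivOfInverse splitMap mergeMap ?_ ?_
  · intro a
    ext n
    show (if n % 2 = 0 then a (2 * (n / 2)) else a (2 * (n / 2) + 1)) = a n
    by_cases hpar : n % 2 = 0
    · rw [if_pos hpar]; congr 1; omega
    · rw [if_neg hpar]; congr 1; omega
  · intro z
    refine Prod.ext ?_ ?_
    · ext n
      show (if (2 * n) % 2 = 0 then z.1 ((2 * n) / 2) else z.2 ((2 * n) / 2)) = z.1 n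
      rw [if_pos (by omega)]
      congr 1; omega
    · ext n
      show (if (2 * n + 1) % 2 = 0 then z.1 ((2 * n + 1) / 2) else z.2 ((2 * n + 1) / 2)) = z.2 n
      rw [if_neg (by omega)]
      congr 1; omega


end Stmt5Aux
end Stmt5AuxSection

/-- For an infinite compact Hausdorff scattered space `K`, the Banach space `C(K)` is
isomorphic (linearly homeomorphic) to `c₀ ⊕ C(K)`, where `c₀` is the space of real
sequences vanishing at infinity. -/
theorem stmt5 (K : Type*) [TopologicalSpace K] [CompactSpace K] [T2Space K] [Infinite K]
    (h : IsScatteredSpace K) :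
    Nonempty (C(K, ℝ) ≃L[ℝ] (ZeroAtInftyContinuousMap ℕ ℝ × C(K, ℝ))) := by
  obtain ⟨x, p, hxinj, hxiso, hp, hconv⟩ := exists_conv_seq K h
  let e1 := Stmt5Aux.mainEquiv hxinj hxiso hp hconv
  exact ⟨e1.trans (((Stmt5Aux.c0Split.prodCongr
      (ContinuousLinearEquiv.refl ℝ (Stmt5Aux.Ysub x p))).trans
    (LinearIsometryEquiv.prodAssoc ℝ _ _ _).toContinuousLinearEquiv).trans
    ((ContinuousLinearEquiv.refl ℝ (ZeroAtInftyContinuousMap ℕ ℝ)).prodCongr e1.symm))⟩
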